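/- Let T be a finite abelian group and H = ℤ × T. If α, β, α′, β′ ∈ H are such that the subgroup of H generated by {α, β} equals the subgroup generated by {α′, β′}, then gcd( card (H ⧸ ⟨α⟩), card (H ⧸ ⟨β⟩) ) = gcd( card (H ⧸ ⟨α′⟩), card (H ⧸ ⟨β′⟩) ). -/

import Mathlib

section Aux

variable {T : Type*} [AddCommGroup T] [Finite T]

/-- The cardinality of `(ℤ × T) ⧸ ⟨(n, t)⟩` is `|n| * |T|`. -/
lemma card_quot_zmultiples (x : ℤ × T) :
    Nat.card ((ℤ × T) ⧸ AddSubgroup.zmultiples x) = x.1.natAbs * Nat.card T := by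
  obtain ⟨n, t⟩ := x
  set A : AddSubgroup (ℤ × T) := AddSubgroup.zmultiples (n, t) with hA
  -- the homomorphism to ℤ ⧸ ⟨n⟩ induced by the first projection
  have hker : A ≤ ((QuotientAddGroup.mk' (AddSubgroup.zmultiples n)).comp
      (AddMonoidHom.fst ℤ T)).ker := by
    rintro ⟨m, s⟩ ⟨k, hk⟩
    simp only [AddMonoidHom.mem_ker, AddMonoidHom.comp_apply,
      QuotientAddGroup.mk'_apply, QuotientAddGroup.eq_zero_iff]
    exact ⟨k, by simpa using congrArg Prod.fst hk⟩
  set g : ((ℤ × T) ⧸ A) →+ (ℤ ⧸ AddSubgroup.zmultiples n) :=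
    QuotientAddGroup.lift A _ hker with hg
  have hgmk : ∀ a : ℤ × T, g (QuotientAddGroup.mk a) = QuotientAddGroup.mk a.1 :=
    fun a => rfl
  have gsurj : Function.Surjective g := by
    intro y
    obtain ⟨m, rfl⟩ := QuotientAddGroup.mk'_surjective (AddSubgroup.zmultiples n) y
    exact ⟨QuotientAddGroup.mk (m, 0), rfl⟩
  -- card of target
  have hcardZ : Nat.card (ℤ ⧸ AddSubgroup.zmultiples n) = n.natAbs := by
    rw [Nat.card_congr (Int.quotientZMultiplesEquivZMod n).toEquiv, Nat.card_zmod]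
  -- multiplicativity
  have hmul := AddSubgroup.card_eq_card_quotient_mul_card_addSubgroup g.ker
  have hiso : Nat.card (((ℤ × T) ⧸ A) ⧸ g.ker) = n.natAbs := by
    rw [Nat.card_congr (QuotientAddGroup.quotientKerEquivOfSurjective g gsurj).toEquiv,
      hcardZ]
  rw [hiso] at hmul
  rcases eq_or_ne n 0 with rfl | hn
  · simpa using hmul
  -- now n ≠ 0 : show Nat.card g.ker = Nat.card T
  have hkercard : Nat.card g.ker = Nat.card T := by
    have hmem : ∀ s : T, g (QuotientAddGroup.mk (0, s)) = 0 := by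
      intro s
      rw [hgmk]
      exact (QuotientAddGroup.eq_zero_iff _).2 ⟨0, by simp⟩
    set f : T → g.ker := fun s => ⟨QuotientAddGroup.mk (0, s), hmem s⟩ with hf
    have finj : Function.Injective f := by
      intro s₁ s₂ hs
      have h1 : (QuotientAddGroup.mk ((0, s₁) : ℤ × T) : (ℤ × T) ⧸ A)
          = QuotientAddGroup.mk (0, s₂) := congrArg Subtype.val hs
      rw [QuotientAddGroup.eq] at h1
      obtain ⟨k, hk⟩ := h1
      have hfst : k * n = 0 := by simpa [zsmul_eq_mul] using congrArg Prod.fst hk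
      have hk0 : k = 0 := by
        rcases mul_eq_zero.1 hfst with h | h
        · exact h
        · exact absurd h hn
      have hsnd := congrArg Prod.snd hk
      simp [hk0] at hsnd
      exact (neg_add_eq_zero.1 hsnd.symm)
    have fsurj : Function.Surjective f := by
      rintro ⟨q, hq⟩
      obtain ⟨⟨m, s⟩, rfl⟩ := QuotientAddGroup.mk'_surjective A q
      simp only [QuotientAddGroup.mk'_apply] at hq ⊢
      rw [AddMonoidHom.mem_ker, hgmk] at hq
      obtain ⟨k, hk⟩ := (QuotientAddGroup.eq_zero_iff _).1 hq
      refine ⟨s - k • t, ?_⟩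
      apply Subtype.ext
      show (QuotientAddGroup.mk ((0, s - k • t) : ℤ × T) : (ℤ × T) ⧸ A)
          = QuotientAddGroup.mk (m, s)
      rw [QuotientAddGroup.eq]
      refine ⟨k, ?_⟩
      simp only [zsmul_eq_mul] at hk
      simp [Prod.ext_iff, zsmul_eq_mul, hk]
      exact_mod_cast hk
    exact (Nat.card_eq_of_bijective f ⟨finj, fsurj⟩).symm
  rw [hkercard] at hmul
  exact hmul

/-- the gcd of the first components only depends on the generated subgroup -/
lemma dvd_of_mem_closure_pair (a b : ℤ) (x : ℤ)
    (hx : x ∈ AddSubgroup.closure ({a, b} : Set ℤ)) : (Int.gcd a b : ℤ) ∣ x := by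
  induction hx using AddSubgroup.closure_induction with
  | mem y hy =>
      rcases hy with rfl | rfl
      · exact Int.gcd_dvd_left _ _
      · exact Int.gcd_dvd_right _ _
  | zero => exact dvd_zero _
  | add y z _ _ hy hz => exact dvd_add hy hz
  | neg y _ hy => exact dvd_neg.2 hy

end Aux

theorem gcd_card_quot_eq_of_closure_eq (T : Type*) [AddCommGroup T] [Finite T]
    (α β α' β' : ℤ × T)
    (h : AddSubgroup.closure ({α, β} : Set (ℤ × T))
        = AddSubgroup.closure ({α', β'} : Set (ℤ × T))) :
    Nat.gcd (Nat.card ((ℤ × T) ⧸ AddSubgroup.zmultiples α))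
        (Nat.card ((ℤ × T) ⧸ AddSubgroup.zmultiples β))
      = Nat.gcd (Nat.card ((ℤ × T) ⧸ AddSubgroup.zmultiples α'))
          (Nat.card ((ℤ × T) ⧸ AddSubgroup.zmultiples β')) := by
  -- reduce to first components
  have key : ∀ (a b a' b' : ℤ × T),
      AddSubgroup.closure ({a, b} : Set (ℤ × T))
        = AddSubgroup.closure ({a', b'} : Set (ℤ × T)) →
      Int.gcd a.1 b.1 ∣ Int.gcd a'.1 b'.1 := by
    intro a b a' b' hcl
    have hmap : ∀ x : ℤ × T, x ∈ AddSubgroup.closure ({a, b} : Set (ℤ × T)) →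
        x.1 ∈ AddSubgroup.closure ({a.1, b.1} : Set ℤ) := by
      intro x hx
      have : x.1 ∈ (AddSubgroup.closure ({a, b} : Set (ℤ × T))).map
          (AddMonoidHom.fst ℤ T) := ⟨x, hx, rfl⟩
      rwa [AddMonoidHom.map_closure, Set.image_insert_eq, Set.image_singleton] at this
    have ha' : (Int.gcd a.1 b.1 : ℤ) ∣ a'.1 :=
      dvd_of_mem_closure_pair _ _ _ (hmap a'
        (hcl ▸ AddSubgroup.subset_closure (Set.mem_insert _ _)))
    have hb' : (Int.gcd a.1 b.1 : ℤ) ∣ b'.1 :=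
      dvd_of_mem_closure_pair _ _ _ (hmap b'
        (hcl ▸ AddSubgroup.subset_closure (Set.mem_insert_of_mem _ rfl)))
    have := Int.dvd_gcd ha' hb'
    exact_mod_cast this
  have hgcd : Int.gcd α.1 β.1 = Int.gcd α'.1 β'.1 :=
    Nat.dvd_antisymm (key α β α' β' h) (key α' β' α β h.symm)
  rw [card_quot_zmultiples α, card_quot_zmultiples β, card_quot_zmultiples α',
    card_quot_zmultiples β', Nat.gcd_mul_right, Nat.gcd_mul_right]
  unfold Int.gcd at hgcd
  rw [hgcd]
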